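/- Let X = ℝ³ with the sup norm ‖·‖_∞ and let W = {(x₁,x₂,x₃) : x₁ + x₂ + x₃ = 0}. Then every linear projector π : X → X with image W and π|_W = id_W has Lipschitz constant (with respect to ‖·‖_∞) strictly greater than 1. (In fact Lip π ≥ 1 + 1/7.) -/

import Mathlib

/-- In `ℝ³` with the sup norm, any linear projector onto the hyperplane
`W = {x : x₀ + x₁ + x₂ = 0}` has Lipschitz constant at least `1 + 1/7 = 8/7`;
in particular strictly greater than `1`. -/
theorem stmt16 (π : (Fin 3 → ℝ) →ₗ[ℝ] (Fin 3 → ℝ))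
    (hrange : ∀ x, π x 0 + π x 1 + π x 2 = 0)
    (hid : ∀ x : Fin 3 → ℝ, x 0 + x 1 + x 2 = 0 → π x = x) :
    ∀ K : NNReal, LipschitzWith K π → (8 / 7 : ℝ) ≤ K := by
  intro K hK
  set e : Fin 3 → ℝ := ![1, 0, 0] with he
  set x : Fin 3 → ℝ := ![1, -1, -1] with hxdef
  set y : Fin 3 → ℝ := ![-1, 1, -1] with hydef
  set z : Fin 3 → ℝ := ![-1, -1, 1] with hzdef
  -- For each test vector w with sum -1, π w = w + e - π e
  have hform : ∀ w : Fin 3 → ℝ, w 0 + w 1 + w 2 = -1 → π w = w + e - π e := by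
    intro w hw
    have hsum : (w + e) 0 + (w + e) 1 + (w + e) 2 = 0 := by
      simp [he, Pi.add_apply]; linarith
    have h1 : π (w + e) = w + e := hid _ hsum
    rw [map_add] at h1
    funext i
    have := congrFun h1 i
    simp [Pi.add_apply, Pi.sub_apply] at this ⊢
    linarith
  have hx : π x = x + e - π e := hform x (by show (1:ℝ) + -1 + -1 = -1; norm_num)
  have hy : π y = y + e - π e := hform y (by show (-1:ℝ) + 1 + -1 = -1; norm_num)
  have hz : π z = z + e - π e := hform z (by show (-1:ℝ) + -1 + 1 = -1; norm_num)
  -- K bounds each component of π w for ‖w‖ ≤ 1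
  have key : ∀ w : Fin 3 → ℝ, ‖w‖ ≤ 1 → ∀ i, π w i ≤ K := by
    intro w hw i
    have h1 : dist (π w) (π 0) ≤ K * dist w 0 := hK.dist_le_mul w 0
    rw [map_zero] at h1
    simp only [dist_zero_right] at h1
    have h2 : |π w i| ≤ ‖π w‖ := by
      simpa using norm_le_pi_norm (π w) i
    have h3 : (K : ℝ) * ‖w‖ ≤ K * 1 := by
      exact mul_le_mul_of_nonneg_left hw K.2
    calc π w i ≤ |π w i| := le_abs_self _
      _ ≤ ‖π w‖ := h2
      _ ≤ K * ‖w‖ := h1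
      _ ≤ K := by linarith
  have hnorm : ∀ w : Fin 3 → ℝ, (∀ i, |w i| ≤ 1) → ‖w‖ ≤ 1 := by
    intro w hw
    apply pi_norm_le_iff_of_nonneg (by norm_num) |>.2
    intro i
    simpa using hw i
  have hxn : ‖x‖ ≤ 1 := hnorm x (by intro i; fin_cases i <;> norm_num [hxdef])
  have hyn : ‖y‖ ≤ 1 := hnorm y (by intro i; fin_cases i <;> norm_num [hydef])
  have hzn : ‖z‖ ≤ 1 := hnorm z (by intro i; fin_cases i <;> norm_num [hzdef])
  have ha : π x 0 ≤ K := key x hxn 0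
  have hb : π y 1 ≤ K := key y hyn 1
  have hc : π z 2 ≤ K := key z hzn 2
  have hsum4 : π x 0 + π y 1 + π z 2 = 4 - (π e 0 + π e 1 + π e 2) := by
    rw [hx, hy, hz]
    simp [Pi.add_apply, Pi.sub_apply, hxdef, hydef, hzdef, he]
    ring
  rw [hrange e] at hsum4
  linarith
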